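/- In terms of Fourier coefficients: let m ∈ ℕ and let (V̂(k))_{k∈ℤ} satisfy Σ_k ⟨k⟩^{−2m}|V̂(k)|² < ∞. Then for every δ > 0 there exists c_δ ≥ 0 such that for all sequences (û(k))_{k∈ℤ} with Σ_k ⟨k⟩^{2m}|û(k)|² < ∞, one has |Σ_{k,j} V̂(k−j) û(j) \overline{û(k)}| ≤ δ Σ_k |k|^{2m}|û(k)|² + c_δ Σ_k |û(k)|². -/

import Mathlib

/- STATEMENT 5 (relative bound zero, sequence form):
Let m ∈ ℕ and Σ_k ⟨k⟩^{−2m}|V̂(k)|² < ∞.  Then for every δ > 0 there is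
c_δ ≥ 0 such that for all û with Σ_k ⟨k⟩^{2m}|û(k)|² < ∞,
|Σ_{k,j} V̂(k−j)û(j)conj(û(k))| ≤ δ Σ_k |k|^{2m}|û(k)|² + c_δ Σ_k |û(k)|². -/

noncomputable section
open Complex

open MeasureTheory ENNReal in
private lemma enn_half_sq (x : ℝ≥0∞) : (x ^ (1/2 : ℝ)) ^ 2 = x := by
  rw [← ENNReal.rpow_natCast (x ^ (1/2:ℝ)) 2, ← ENNReal.rpow_mul]; norm_num

open MeasureTheory ENNReal in
private lemma enn_sq_half (x : ℝ≥0∞) : (x ^ 2) ^ (1/2 : ℝ) = x := by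
  rw [← ENNReal.rpow_natCast x 2, ← ENNReal.rpow_mul]; norm_num

open MeasureTheory ENNReal in
private lemma enn_cs (f g : ℤ → ℝ≥0∞) :
    ∑' i, f i * g i ≤ (∑' i, f i ^ 2) ^ (1/2 : ℝ) * (∑' i, g i ^ 2) ^ (1/2 : ℝ) := by
  have hpq : Real.HolderConjugate 2 2 := Real.holderConjugate_iff.mpr ⟨one_lt_two, by norm_num⟩
  have h := ENNReal.lintegral_mul_le_Lp_mul_Lq (μ := (Measure.count : Measure ℤ)) hpq
    (measurable_of_countable f).aemeasurable (measurable_of_countable g).aemeasurable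
  have e2 : ∀ x : ℝ≥0∞, x ^ (2:ℝ) = x ^ (2:ℕ) := fun x => by
    rw [show (2:ℝ) = ((2:ℕ):ℝ) by norm_num, ENNReal.rpow_natCast]
  simp only [MeasureTheory.lintegral_count, Pi.mul_apply, e2] at h
  simpa using h

open ENNReal in
private lemma enn_shift (F : ℤ → ℝ≥0∞) (l : ℤ) : ∑' j, F (l + j) = ∑' j, F j :=
  (Equiv.addLeft l).tsum_eq F

open ENNReal in
private lemma enn_shift' (F : ℤ → ℝ≥0∞) (l : ℤ) : ∑' j, F (j + l) = ∑' j, F j :=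
  (Equiv.addRight l).tsum_eq F

open ENNReal in
private lemma enn_add_pow_le (y z : ℝ≥0∞) (m : ℕ) : (y + z) ^ m ≤ 2 ^ m * (y ^ m + z ^ m) := by
  calc (y + z) ^ m ≤ (2 * (y ⊔ z)) ^ m := by
        gcongr
        rcases le_total y z with h | h
        · simp only [max_eq_right h, two_mul]
          exact add_le_add h le_rfl
        · simp only [max_eq_left h, two_mul]
          exact add_le_add le_rfl h
    _ = 2 ^ m * (y ⊔ z) ^ m := by rw [mul_pow]
    _ ≤ 2 ^ m * (y ^ m + z ^ m) := by
        gcongr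
        rcases le_total y z with h | h
        · rw [max_eq_right h]; exact le_add_self
        · rw [max_eq_left h]; exact le_add_right le_rfl

private lemma summable_inv_one_add_abs_sq :
    Summable (fun l : ℤ => (((1 + |(l:ℝ)|)) ^ 2)⁻¹) := by
  have h1 : Summable fun n : ℤ => 1 / (n:ℝ)^2 :=
    Real.summable_one_div_int_pow.mpr one_lt_two
  have h2 : Summable (fun l : ℤ => (if l = 0 then (1:ℝ) else 0)) :=
    summable_of_ne_finset_zero (s := {0})
      (by intro c hc; simp only [Finset.mem_singleton] at hc; simp [hc])
  have h3 : Summable (fun l : ℤ => 1 / (l:ℝ)^2 + (if l = 0 then (1:ℝ) else 0)) := h1.add h2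
  apply h3.of_nonneg_of_le
  · intro l; positivity
  · intro l
    by_cases hl : l = 0
    · simp [hl]
    · have hl1 : (1:ℝ) ≤ |(l:ℝ)| := by
        rw [← Int.cast_abs]
        exact_mod_cast Int.one_le_abs (by exact_mod_cast hl)
      have h4 : (l:ℝ)^2 ≤ (1 + |(l:ℝ)|)^2 := by
        rw [← _root_.sq_abs]
        apply pow_le_pow_left₀ (abs_nonneg _)
        linarith
      simp only [hl, if_false, add_zero]
      rw [one_div]
      exact inv_anti₀ (by positivity) h4

private def shearEquiv : ℤ × ℤ ≃ ℤ × ℤ :=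
  ⟨fun q => (q.1 + q.2, q.2), fun p => (p.1 - p.2, p.2),
    fun q => by simp, fun p => by simp⟩

open ENNReal in
theorem relative_bound_zero_seq (m : ℕ) (hm : 1 ≤ m) (V : ℤ → ℂ)
    (hV : Summable fun k : ℤ => ((1 + |k| : ℝ)) ^ (-(2 * m : ℝ)) * ‖V k‖ ^ 2) :
    ∀ δ > (0 : ℝ), ∃ c ≥ (0 : ℝ), ∀ u : ℤ → ℂ,
      (Summable fun k : ℤ => ((1 + |k| : ℝ)) ^ (2 * m : ℝ) * ‖u k‖ ^ 2) →
      ‖∑' p : ℤ × ℤ, V (p.1 - p.2) * u p.2 * (starRingEnd ℂ) (u p.1)‖ ≤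
        δ * (∑' k : ℤ, |(k : ℝ)| ^ (2 * m) * ‖u k‖ ^ 2) +
          c * ∑' k : ℤ, ‖u k‖ ^ 2 := by
  simp only [Int.cast_abs] at hV
  intro δ hδ
  set eK : ℤ → ℝ≥0∞ := fun k => ENNReal.ofReal (1 + |(k:ℝ)|) with heK
  have heKr : ∀ k : ℤ, (0:ℝ) < 1 + |(k:ℝ)| := fun k => by positivity
  have heK1 : ∀ k, 1 ≤ eK k := fun k => by
    rw [heK]; simp only
    rw [show (1:ℝ≥0∞) = ENNReal.ofReal 1 by simp]
    exact ENNReal.ofReal_le_ofReal (by simp [abs_nonneg])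
  have heK0 : ∀ k, eK k ≠ 0 := fun k => by
    intro h; exact absurd (h ▸ heK1 k) (by simp)
  have heKtop : ∀ k, eK k ≠ ∞ := fun k => ENNReal.ofReal_ne_top
  have htri : ∀ l j : ℤ, eK l ≤ eK j + eK (l + j) := by
    intro l j
    rw [heK]; simp only
    rw [← ENNReal.ofReal_add (by positivity) (by positivity)]
    apply ENNReal.ofReal_le_ofReal
    have h : |(l:ℝ)| ≤ |((l+j : ℤ):ℝ)| + |(j:ℝ)| := by
      have h0 : (l:ℝ) = ((l+j:ℤ):ℝ) - (j:ℝ) := by push_cast; ring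
      rw [h0]
      exact abs_sub _ _
    linarith
  set eV : ℤ → ℝ≥0∞ := fun l => ENNReal.ofReal ‖V l‖ with heV
  set ew : ℤ → ℝ≥0∞ := fun l => eV l * ((eK l)⁻¹) ^ m with hew
  have hewK : ∀ l, ew l * eK l ^ m = eV l := by
    intro l
    rw [hew]; simp only
    rw [mul_assoc, ← mul_pow, ENNReal.inv_mul_cancel (heK0 l) (heKtop l), one_pow, mul_one]
  set A : ℝ≥0∞ := ∑' l : ℤ, (((eK l)⁻¹) ^ m) ^ 2 with hA
  have hAtop : A ≠ ∞ := by
    have hle : ∀ l : ℤ, (((eK l)⁻¹) ^ m) ^ 2 ≤ ENNReal.ofReal (((1 + |(l:ℝ)|) ^ 2)⁻¹) := by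
      intro l
      have h1 : (eK l)⁻¹ ≤ 1 := by rw [ENNReal.inv_le_one]; exact heK1 l
      have h2 : ((eK l)⁻¹) ^ m ≤ (eK l)⁻¹ := by
        calc ((eK l)⁻¹) ^ m ≤ ((eK l)⁻¹) ^ 1 := pow_le_pow_right_of_le_one' h1 hm
          _ = (eK l)⁻¹ := pow_one _
      have h3 : (((eK l)⁻¹) ^ m) ^ 2 ≤ ((eK l)⁻¹) ^ 2 := by gcongr
      refine h3.trans_eq ?_
      rw [heK]; simp only
      rw [← ENNReal.ofReal_inv_of_pos (heKr l), ← ENNReal.ofReal_pow (by positivity), ← inv_pow]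
    have h4 : A ≤ ∑' l : ℤ, ENNReal.ofReal (((1 + |(l:ℝ)|) ^ 2)⁻¹) :=
      Summable.tsum_le_tsum hle ENNReal.summable ENNReal.summable
    apply ne_top_of_le_ne_top _ h4
    rw [← ENNReal.ofReal_tsum_of_nonneg (fun l => by positivity) summable_inv_one_add_abs_sq]
    exact ENNReal.ofReal_ne_top
  have hAsq_top : A ^ (1/2:ℝ) ≠ ∞ := ENNReal.rpow_ne_top_of_nonneg (by norm_num) hAtop
  have hA1 : 1 ≤ A := by
    have h := ENNReal.le_tsum (f := fun l : ℤ => (((eK l)⁻¹) ^ m) ^ 2) 0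
    simpa [heK] using h
  have hAsq0 : A ^ (1/2:ℝ) ≠ 0 := by
    simp only [ne_eq, ENNReal.rpow_eq_zero_iff, not_or]
    constructor
    · rintro ⟨h0, -⟩
      exact absurd (h0 ▸ hA1) (by simp)
    · rintro ⟨-, h0⟩; norm_num at h0
  have hwV : ∀ l, ew l ^ 2 = ENNReal.ofReal ((1 + |(l:ℝ)|) ^ (-(2 * (m:ℝ))) * ‖V l‖ ^ 2) := by
    intro l
    rw [hew, heV, heK]; simp only
    rw [show (-(2 * (m:ℝ))) = -((2*m : ℕ):ℝ) by push_cast; ring, Real.rpow_neg (heKr l).le,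
      Real.rpow_natCast]
    rw [mul_pow, ← pow_mul, ENNReal.ofReal_mul (by positivity),
      ← ENNReal.ofReal_inv_of_pos (heKr l), ← ENNReal.ofReal_pow (by positivity),
      ← ENNReal.ofReal_pow (by positivity), ← inv_pow]
    ring_nf
  have hwtop : (∑' l : ℤ, ew l ^ 2) ≠ ∞ := by
    rw [tsum_congr hwV, ← ENNReal.ofReal_tsum_of_nonneg (fun l => by positivity) hV]
    exact ENNReal.ofReal_ne_top
  set D : ℝ≥0∞ := 2 ^ (3*m+1) * A ^ (1/2:ℝ) with hD
  have hD0 : D ≠ 0 := mul_ne_zero (by positivity) hAsq0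
  have hDtop : D ≠ ∞ := ENNReal.mul_ne_top (by simp) hAsq_top
  set εb : ℝ≥0∞ := ENNReal.ofReal δ / D with hεb
  have hεb0 : (0:ℝ≥0∞) < εb ^ 2 :=
    ENNReal.pow_pos (ENNReal.div_pos (ENNReal.ofReal_pos.mpr hδ).ne' hDtop) 2
  obtain ⟨F, hF⟩ : ∃ F : Finset ℤ, (∑' l : {l : ℤ // l ∉ F}, ew l ^ 2) ≤ εb ^ 2 := by
    have hten := ENNReal.tendsto_tsum_compl_atTop_zero (f := fun l : ℤ => ew l ^ 2) hwtop
    obtain ⟨F, hF⟩ := (hten.eventually_lt_const hεb0).exists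
    exact ⟨F, hF.le⟩
  set CF : ℝ≥0∞ := ∑ l ∈ F, eV l with hCF
  have hCFtop : CF ≠ ∞ := (ENNReal.sum_lt_top.mpr fun a _ => ENNReal.ofReal_lt_top).ne
  refine ⟨CF.toReal + δ, by positivity, ?_⟩
  intro u hu
  simp only [Int.cast_abs] at hu
  set eU : ℤ → ℝ≥0∞ := fun k => ENNReal.ofReal ‖u k‖ with heU
  set b : ℤ → ℝ≥0∞ := fun k => eK k ^ m * eU k with hb
  set Q : ℝ≥0∞ := ∑' k : ℤ, b k ^ 2 with hQ
  set U : ℝ≥0∞ := ∑' k : ℤ, eU k ^ 2 with hU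
  set P : ℝ≥0∞ := ∑' k : ℤ, ENNReal.ofReal (|(k:ℝ)| ^ (2*m)) * eU k ^ 2 with hP
  set L : ℝ≥0∞ := ∑' k : ℤ, eU k with hL
  have hbq : ∀ k, b k ^ 2 = ENNReal.ofReal ((1 + |(k:ℝ)|) ^ ((2 * (m:ℝ))) * ‖u k‖ ^ 2) := by
    intro k
    rw [hb, heU, heK]; simp only
    rw [show ((2 * (m:ℝ))) = ((2*m : ℕ):ℝ) by push_cast; ring, Real.rpow_natCast]
    rw [mul_pow, ← pow_mul, ENNReal.ofReal_mul (by positivity),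
      ← ENNReal.ofReal_pow (by positivity), ← ENNReal.ofReal_pow (by positivity)]
    ring_nf
  have hQtop : Q ≠ ∞ := by
    rw [hQ, tsum_congr hbq, ← ENNReal.ofReal_tsum_of_nonneg (fun l => by positivity) hu]
    exact ENNReal.ofReal_ne_top
  have hUQ : U ≤ Q := by
    apply Summable.tsum_le_tsum _ ENNReal.summable ENNReal.summable
    intro k
    rw [hb]; simp only
    gcongr
    exact le_mul_of_one_le_left (zero_le) (one_le_pow_of_one_le' (heK1 k) m)
  have hPQ : P ≤ Q := by
    apply Summable.tsum_le_tsum _ ENNReal.summable ENNReal.summable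
    intro k
    rw [hb, heK]; simp only
    rw [mul_pow, ← pow_mul, mul_comm m 2]
    gcongr
    rw [← ENNReal.ofReal_pow (by positivity)]
    apply ENNReal.ofReal_le_ofReal
    apply pow_le_pow_left₀ (abs_nonneg _)
    linarith [abs_nonneg (k:ℝ)]
  have hUtop : U ≠ ∞ := ne_top_of_le_ne_top hQtop hUQ
  have hPtop : P ≠ ∞ := ne_top_of_le_ne_top hQtop hPQ
  have hLb : L ≤ A ^ (1/2:ℝ) * Q ^ (1/2:ℝ) := by
    have hcb : ∀ k, eU k = ((eK k)⁻¹) ^ m * b k := by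
      intro k
      rw [hb]; simp only
      rw [← mul_assoc, ← mul_pow, ENNReal.inv_mul_cancel (heK0 k) (heKtop k), one_pow, one_mul]
    rw [hL, tsum_congr hcb]
    exact enn_cs _ _
  set G : ℤ → ℝ≥0∞ := fun l => ∑' j : ℤ, eU j * eU (l + j) with hG
  set H1 : ℤ → ℝ≥0∞ := fun l => ∑' j : ℤ, b j * eU (l + j) with hH1
  set H2 : ℤ → ℝ≥0∞ := fun l => ∑' j : ℤ, eU j * b (l + j) with hH2
  have hGU : ∀ l, G l ≤ U := by
    intro l
    have h := enn_cs eU (fun j => eU (l + j))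
    have h2 : (∑' j : ℤ, eU (l + j) ^ 2) = U := enn_shift (fun j => eU j ^ 2) l
    rw [h2] at h
    refine h.trans_eq ?_
    rw [← sq, enn_half_sq]
  -- ℓ² bounds on the correlations H1 and H2
  have hH1sum : (∑' l : ℤ, H1 l ^ 2) ≤ A * Q ^ 2 := by
    have hpt : ∀ l : ℤ, H1 l ≤ L ^ (1/2:ℝ) * (∑' j : ℤ, b j ^ 2 * eU (l + j)) ^ (1/2:ℝ) := by
      intro l
      have h := enn_cs (fun j => (eU (l + j)) ^ (1/2:ℝ)) (fun j => b j * (eU (l + j)) ^ (1/2:ℝ))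
      have e1 : ∀ j : ℤ, (eU (l + j)) ^ (1/2:ℝ) * (b j * (eU (l + j)) ^ (1/2:ℝ))
          = b j * eU (l + j) := by
        intro j
        calc (eU (l + j)) ^ (1/2:ℝ) * (b j * (eU (l + j)) ^ (1/2:ℝ))
            = b j * ((eU (l + j)) ^ (1/2:ℝ)) ^ 2 := by ring
          _ = b j * eU (l + j) := by rw [enn_half_sq]
      have e2 : ∀ j : ℤ, ((eU (l + j)) ^ (1/2:ℝ)) ^ 2 = eU (l + j) := fun j => enn_half_sq _
      have e3 : ∀ j : ℤ, (b j * (eU (l + j)) ^ (1/2:ℝ)) ^ 2 = b j ^ 2 * eU (l + j) := by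
        intro j; rw [mul_pow, enn_half_sq]
      rw [tsum_congr e1, tsum_congr e2, tsum_congr e3] at h
      rwa [enn_shift (fun j => eU j) l] at h
    have hsq : ∀ l : ℤ, H1 l ^ 2 ≤ L * (∑' j : ℤ, b j ^ 2 * eU (l + j)) := by
      intro l
      calc H1 l ^ 2
          ≤ (L ^ (1/2:ℝ) * (∑' j : ℤ, b j ^ 2 * eU (l + j)) ^ (1/2:ℝ)) ^ 2 := by
            gcongr; exact hpt l
        _ = L * (∑' j : ℤ, b j ^ 2 * eU (l + j)) := by rw [mul_pow, enn_half_sq, enn_half_sq]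
    calc (∑' l : ℤ, H1 l ^ 2)
        ≤ ∑' l : ℤ, L * (∑' j : ℤ, b j ^ 2 * eU (l + j)) :=
          Summable.tsum_le_tsum hsq ENNReal.summable ENNReal.summable
      _ = L * ∑' l : ℤ, ∑' j : ℤ, b j ^ 2 * eU (l + j) := ENNReal.tsum_mul_left
      _ = L * ∑' j : ℤ, ∑' l : ℤ, b j ^ 2 * eU (l + j) := by rw [ENNReal.tsum_comm]
      _ = L * ∑' j : ℤ, b j ^ 2 * ∑' l : ℤ, eU (l + j) := by
          congr 1; exact tsum_congr fun j => ENNReal.tsum_mul_left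
      _ = L * (Q * L) := by
          congr 1
          rw [hQ, ← ENNReal.tsum_mul_right]
          exact tsum_congr fun j => by rw [enn_shift' eU j, hL]
      _ = L ^ 2 * Q := by ring
      _ ≤ (A ^ (1/2:ℝ) * Q ^ (1/2:ℝ)) ^ 2 * Q := by gcongr
      _ = A * Q ^ 2 := by rw [mul_pow, enn_half_sq, enn_half_sq]; ring
  have hH2sum : (∑' l : ℤ, H2 l ^ 2) ≤ A * Q ^ 2 := by
    have hpt : ∀ l : ℤ, H2 l ≤ L ^ (1/2:ℝ) * (∑' j : ℤ, eU j * b (l + j) ^ 2) ^ (1/2:ℝ) := by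
      intro l
      have h := enn_cs (fun j => (eU j) ^ (1/2:ℝ)) (fun j => (eU j) ^ (1/2:ℝ) * b (l + j))
      have e1 : ∀ j : ℤ, (eU j) ^ (1/2:ℝ) * ((eU j) ^ (1/2:ℝ) * b (l + j))
          = eU j * b (l + j) := by
        intro j
        calc (eU j) ^ (1/2:ℝ) * ((eU j) ^ (1/2:ℝ) * b (l + j))
            = ((eU j) ^ (1/2:ℝ)) ^ 2 * b (l + j) := by ring
          _ = eU j * b (l + j) := by rw [enn_half_sq]
      have e2 : ∀ j : ℤ, ((eU j) ^ (1/2:ℝ)) ^ 2 = eU j := fun j => enn_half_sq _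
      have e3 : ∀ j : ℤ, ((eU j) ^ (1/2:ℝ) * b (l + j)) ^ 2 = eU j * b (l + j) ^ 2 := by
        intro j; rw [mul_pow, enn_half_sq]
      rw [tsum_congr e1, tsum_congr e2, tsum_congr e3] at h
      exact h
    have hsq : ∀ l : ℤ, H2 l ^ 2 ≤ L * (∑' j : ℤ, eU j * b (l + j) ^ 2) := by
      intro l
      calc H2 l ^ 2
          ≤ (L ^ (1/2:ℝ) * (∑' j : ℤ, eU j * b (l + j) ^ 2) ^ (1/2:ℝ)) ^ 2 := by
            gcongr; exact hpt l
        _ = L * (∑' j : ℤ, eU j * b (l + j) ^ 2) := by rw [mul_pow, enn_half_sq, enn_half_sq]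
    calc (∑' l : ℤ, H2 l ^ 2)
        ≤ ∑' l : ℤ, L * (∑' j : ℤ, eU j * b (l + j) ^ 2) :=
          Summable.tsum_le_tsum hsq ENNReal.summable ENNReal.summable
      _ = L * ∑' l : ℤ, ∑' j : ℤ, eU j * b (l + j) ^ 2 := ENNReal.tsum_mul_left
      _ = L * ∑' j : ℤ, ∑' l : ℤ, eU j * b (l + j) ^ 2 := by rw [ENNReal.tsum_comm]
      _ = L * ∑' j : ℤ, eU j * ∑' l : ℤ, b (l + j) ^ 2 := by
          congr 1; exact tsum_congr fun j => ENNReal.tsum_mul_left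
      _ = L * (L * Q) := by
          congr 1
          rw [hL, ← ENNReal.tsum_mul_right]
          exact tsum_congr fun j => by rw [enn_shift' (fun x => b x ^ 2) j, hQ]
      _ = L ^ 2 * Q := by ring
      _ ≤ (A ^ (1/2:ℝ) * Q ^ (1/2:ℝ)) ^ 2 * Q := by gcongr
      _ = A * Q ^ 2 := by rw [mul_pow, enn_half_sq, enn_half_sq]; ring
  -- the full double sum in ℝ≥0∞
  set S : ℝ≥0∞ := ∑' p : ℤ × ℤ, eV (p.1 - p.2) * (eU p.2 * eU p.1) with hS
  have hSsplit : S = ∑' l : ℤ, eV l * G l := by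
    rw [hS]
    have h := shearEquiv.tsum_eq (fun p : ℤ × ℤ => eV (p.1 - p.2) * (eU p.2 * eU p.1))
    rw [← h]
    have e1 : ∀ q : ℤ × ℤ, eV ((shearEquiv q).1 - (shearEquiv q).2)
        * (eU (shearEquiv q).2 * eU (shearEquiv q).1)
        = eV q.1 * (eU q.2 * eU (q.1 + q.2)) := by
      intro q; simp [shearEquiv]
    rw [tsum_congr e1, ENNReal.tsum_prod (f := fun l j => eV l * (eU j * eU (l + j)))]
    exact tsum_congr fun l => ENNReal.tsum_mul_left
  have hlow : (∑' l : ((F : Set ℤ)), eV l * G l) ≤ CF * U := by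
    calc (∑' l : ((F : Set ℤ)), eV l * G l) ≤ ∑' l : ((F : Set ℤ)), eV l * U :=
          Summable.tsum_le_tsum (fun l => mul_le_mul_right (hGU l) _) ENNReal.summable ENNReal.summable
      _ = (∑' l : ((F : Set ℤ)), eV l) * U := ENNReal.tsum_mul_right
      _ = CF * U := by rw [F.tsum_subtype' eV]
  -- the tail
  have hKG : ∀ l : ℤ, eK l ^ m * G l ≤ 2 ^ m * (H1 l + H2 l) := by
    intro l
    rw [hG]; simp only
    rw [← ENNReal.tsum_mul_left]
    calc (∑' j : ℤ, eK l ^ m * (eU j * eU (l + j)))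
        ≤ ∑' j : ℤ, (2 ^ m * (eK j ^ m + eK (l + j) ^ m)) * (eU j * eU (l + j)) := by
          apply Summable.tsum_le_tsum _ ENNReal.summable ENNReal.summable
          intro j
          apply mul_le_mul_left
          calc eK l ^ m ≤ (eK j + eK (l + j)) ^ m := by gcongr; exact htri l j
            _ ≤ 2 ^ m * (eK j ^ m + eK (l + j) ^ m) := enn_add_pow_le _ _ m
      _ = ∑' j : ℤ, 2 ^ m * ((eK j ^ m * eU j) * eU (l + j)
            + eU j * (eK (l + j) ^ m * eU (l + j))) := tsum_congr fun j => by ring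
      _ = 2 ^ m * (H1 l + H2 l) := by
          rw [ENNReal.tsum_mul_left, ENNReal.tsum_add]
  have hwH : ∀ (X : ℤ → ℝ≥0∞), (∑' l : ℤ, X l ^ 2) ≤ A * Q ^ 2 →
      (∑' l : ((F : Set ℤ)ᶜ : Set ℤ), ew l * X l) ≤ εb * (A ^ (1/2:ℝ) * Q) := by
    intro X hSX
    set s : Set ℤ := ((F : Set ℤ)ᶜ) with hs
    have h1 : (∑' l : s, ew l * X l) = ∑' l : ℤ, s.indicator (fun l => ew l * X l) l :=
      tsum_subtype s (fun l => ew l * X l)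
    have h2 : ∀ l, s.indicator (fun l => ew l * X l) l = (s.indicator ew l) * X l := by
      intro l
      by_cases h : l ∈ s <;> simp [Set.indicator_of_mem, Set.indicator_of_notMem, h]
    have h3 : ∀ l, (s.indicator ew l) ^ 2 = s.indicator (fun l => ew l ^ 2) l := by
      intro l
      by_cases h : l ∈ s <;> simp [Set.indicator_of_mem, Set.indicator_of_notMem, h]
    have h4 : (∑' l : ℤ, s.indicator (fun l => ew l ^ 2) l) ≤ εb ^ 2 := by
      rw [← tsum_subtype s (fun l => ew l ^ 2)]
      refine le_trans (le_of_eq ?_) hF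
      exact (Equiv.subtypeEquivRight (fun l => by simp [hs])).tsum_eq
        (fun l : {l : ℤ // l ∉ F} => ew l ^ 2) |>.symm
    calc (∑' l : s, ew l * X l) = ∑' l : ℤ, (s.indicator ew l) * X l := by
          rw [h1]; exact tsum_congr h2
      _ ≤ (∑' l : ℤ, (s.indicator ew l) ^ 2) ^ (1/2:ℝ) * (∑' l : ℤ, X l ^ 2) ^ (1/2:ℝ) :=
          enn_cs _ _
      _ ≤ (εb ^ 2) ^ (1/2:ℝ) * (A * Q ^ 2) ^ (1/2:ℝ) := by
          apply mul_le_mul'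
          · apply ENNReal.rpow_le_rpow _ (by norm_num)
            rw [tsum_congr h3]; exact h4
          · exact ENNReal.rpow_le_rpow hSX (by norm_num)
      _ = εb * (A ^ (1/2:ℝ) * Q) := by
          rw [enn_sq_half, ENNReal.mul_rpow_of_nonneg _ _ (by norm_num : (0:ℝ) ≤ 1/2),
            enn_sq_half]
  have htail : (∑' l : ((F : Set ℤ)ᶜ : Set ℤ), eV l * G l) ≤
      2 ^ (m+1) * εb * (A ^ (1/2:ℝ) * Q) := by
    have hpt : ∀ l : ℤ, eV l * G l ≤ 2 ^ m * (ew l * H1 l + ew l * H2 l) := by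
      intro l
      rw [← hewK l, mul_assoc]
      calc ew l * (eK l ^ m * G l) ≤ ew l * (2 ^ m * (H1 l + H2 l)) :=
            mul_le_mul_right (hKG l) _
        _ = 2 ^ m * (ew l * H1 l + ew l * H2 l) := by ring
    calc (∑' l : ((F : Set ℤ)ᶜ : Set ℤ), eV l * G l)
        ≤ ∑' l : ((F : Set ℤ)ᶜ : Set ℤ), 2 ^ m * (ew l * H1 l + ew l * H2 l) :=
          Summable.tsum_le_tsum (fun l => hpt l) ENNReal.summable ENNReal.summable
      _ = 2 ^ m * ((∑' l : ((F : Set ℤ)ᶜ : Set ℤ), ew l * H1 l)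
            + ∑' l : ((F : Set ℤ)ᶜ : Set ℤ), ew l * H2 l) := by
          rw [ENNReal.tsum_mul_left, ENNReal.tsum_add]
      _ ≤ 2 ^ m * (εb * (A ^ (1/2:ℝ) * Q) + εb * (A ^ (1/2:ℝ) * Q)) := by
          gcongr
          · exact hwH H1 hH1sum
          · exact hwH H2 hH2sum
      _ = 2 ^ (m+1) * εb * (A ^ (1/2:ℝ) * Q) := by rw [pow_succ]; ring
  have hQPU : Q ≤ 2 ^ (2*m) * (P + U) := by
    have hpt : ∀ k : ℤ, b k ^ 2 ≤ 2 ^ (2*m) * (ENNReal.ofReal (|(k:ℝ)| ^ (2*m)) * eU k ^ 2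
        + eU k ^ 2) := by
      intro k
      have hKk : eK k = ENNReal.ofReal |(k:ℝ)| + 1 := by
        rw [heK]; simp only
        rw [add_comm (1:ℝ), ENNReal.ofReal_add (abs_nonneg _) zero_le_one, ENNReal.ofReal_one]
      have h1 : eK k ^ (2*m) ≤ 2 ^ (2*m) * (ENNReal.ofReal (|(k:ℝ)| ^ (2*m)) + 1) := by
        rw [hKk]
        calc (ENNReal.ofReal |(k:ℝ)| + 1) ^ (2*m)
            ≤ 2 ^ (2*m) * ((ENNReal.ofReal |(k:ℝ)|) ^ (2*m) + 1 ^ (2*m)) :=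
              enn_add_pow_le _ _ (2*m)
          _ = 2 ^ (2*m) * (ENNReal.ofReal (|(k:ℝ)| ^ (2*m)) + 1) := by
              rw [ENNReal.ofReal_pow (abs_nonneg _), one_pow]
      calc b k ^ 2 = eK k ^ (2*m) * eU k ^ 2 := by
            rw [hb]; simp only; rw [mul_pow, ← pow_mul, mul_comm m 2]
        _ ≤ (2 ^ (2*m) * (ENNReal.ofReal (|(k:ℝ)| ^ (2*m)) + 1)) * eU k ^ 2 := by
            gcongr
        _ = 2 ^ (2*m) * (ENNReal.ofReal (|(k:ℝ)| ^ (2*m)) * eU k ^ 2 + eU k ^ 2) := by ring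
    calc Q ≤ ∑' k : ℤ, 2 ^ (2*m) * (ENNReal.ofReal (|(k:ℝ)| ^ (2*m)) * eU k ^ 2 + eU k ^ 2) :=
          Summable.tsum_le_tsum hpt ENNReal.summable ENNReal.summable
      _ = 2 ^ (2*m) * (P + U) := by rw [ENNReal.tsum_mul_left, ENNReal.tsum_add]
  have hmain : S ≤ ENNReal.ofReal δ * P + (CF + ENNReal.ofReal δ) * U := by
    have hsplit2 : S = (∑' l : ((F : Set ℤ)), eV l * G l)
        + ∑' l : ((F : Set ℤ)ᶜ : Set ℤ), eV l * G l := by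
      rw [hSsplit]
      exact (Summable.tsum_add_tsum_compl (s := (F : Set ℤ)) ENNReal.summable ENNReal.summable).symm
    calc S ≤ CF * U + 2 ^ (m+1) * εb * (A ^ (1/2:ℝ) * Q) := by
          rw [hsplit2]; exact add_le_add hlow htail
      _ ≤ CF * U + 2 ^ (m+1) * εb * (A ^ (1/2:ℝ) * (2 ^ (2*m) * (P + U))) := by gcongr
      _ = CF * U + (D * εb) * (P + U) := by
          rw [hD]
          rw [show (3*m+1) = (m+1) + 2*m by ring, pow_add]
          ring
      _ = CF * U + ENNReal.ofReal δ * (P + U) := by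
          rw [hεb, ENNReal.mul_div_cancel hD0 hDtop]
      _ = ENNReal.ofReal δ * P + (CF + ENNReal.ofReal δ) * U := by ring
  -- back to the real numbers
  set fC : ℤ × ℤ → ℂ := fun p => V (p.1 - p.2) * u p.2 * (starRingEnd ℂ) (u p.1) with hfC
  have hnorm : ∀ p : ℤ × ℤ, ENNReal.ofReal ‖fC p‖ = eV (p.1 - p.2) * (eU p.2 * eU p.1) := by
    intro p
    rw [hfC]; simp only
    rw [norm_mul, norm_mul, RCLike.norm_conj]
    rw [ENNReal.ofReal_mul (by positivity), ENNReal.ofReal_mul (norm_nonneg _)]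
    simp only [heV, heU]
    ring
  have hRHStop : ENNReal.ofReal δ * P + (CF + ENNReal.ofReal δ) * U ≠ ∞ := by
    apply ENNReal.add_ne_top.mpr
    constructor
    · exact ENNReal.mul_ne_top ENNReal.ofReal_ne_top hPtop
    · exact ENNReal.mul_ne_top (ENNReal.add_ne_top.mpr ⟨hCFtop, ENNReal.ofReal_ne_top⟩) hUtop
  have hStop : S ≠ ∞ := ne_top_of_le_ne_top hRHStop hmain
  have hScoe : S = ∑' p : ℤ × ℤ, (‖fC p‖₊ : ℝ≥0∞) := by
    rw [hS]
    refine tsum_congr fun p => ?_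
    rw [← ENNReal.ofReal_coe_nnreal, coe_nnnorm, hnorm p]
  have hnnsum : Summable fun p : ℤ × ℤ => ‖fC p‖₊ :=
    ENNReal.tsum_coe_ne_top_iff_summable.mp (hScoe ▸ hStop)
  have hsumnorm : Summable fun p : ℤ × ℤ => ‖fC p‖ := by
    have := NNReal.summable_coe.mpr hnnsum
    simpa [coe_nnnorm] using this
  have htsum_norm : (∑' p : ℤ × ℤ, ‖fC p‖) = S.toReal := by
    have h1 : ENNReal.ofReal (∑' p : ℤ × ℤ, ‖fC p‖) = S := by
      rw [ENNReal.ofReal_tsum_of_nonneg (fun p => norm_nonneg _) hsumnorm, hS]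
      exact tsum_congr hnorm
    rw [← h1, ENNReal.toReal_ofReal (tsum_nonneg fun p => norm_nonneg _)]
  have hPreal : P.toReal = ∑' k : ℤ, |(k:ℝ)| ^ (2*m) * ‖u k‖ ^ 2 := by
    rw [hP, ENNReal.tsum_toReal_eq
      (fun k => ENNReal.mul_ne_top ENNReal.ofReal_ne_top
        (pow_ne_top ENNReal.ofReal_ne_top))]
    refine tsum_congr fun k => ?_
    rw [ENNReal.toReal_mul, ENNReal.toReal_pow]
    rw [ENNReal.toReal_ofReal (by positivity), ENNReal.toReal_ofReal (norm_nonneg _)]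
  have hUreal : U.toReal = ∑' k : ℤ, ‖u k‖ ^ 2 := by
    rw [hU, ENNReal.tsum_toReal_eq (fun k => pow_ne_top ENNReal.ofReal_ne_top)]
    refine tsum_congr fun k => ?_
    rw [ENNReal.toReal_pow]
    rw [ENNReal.toReal_ofReal (norm_nonneg _)]
  calc ‖∑' p : ℤ × ℤ, V (p.1 - p.2) * u p.2 * (starRingEnd ℂ) (u p.1)‖
      = ‖∑' p : ℤ × ℤ, fC p‖ := by rw [hfC]
    _ ≤ ∑' p : ℤ × ℤ, ‖fC p‖ := norm_tsum_le_tsum_norm hsumnorm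
    _ = S.toReal := htsum_norm
    _ ≤ (ENNReal.ofReal δ * P + (CF + ENNReal.ofReal δ) * U).toReal :=
        ENNReal.toReal_mono hRHStop hmain
    _ = δ * P.toReal + (CF.toReal + δ) * U.toReal := by
        rw [ENNReal.toReal_add (ENNReal.mul_ne_top ENNReal.ofReal_ne_top hPtop)
          (ENNReal.mul_ne_top (ENNReal.add_ne_top.mpr ⟨hCFtop, ENNReal.ofReal_ne_top⟩) hUtop),
          ENNReal.toReal_mul, ENNReal.toReal_mul,
          ENNReal.toReal_add hCFtop ENNReal.ofReal_ne_top,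
          ENNReal.toReal_ofReal hδ.le]
    _ = δ * (∑' k : ℤ, |(k:ℝ)| ^ (2*m) * ‖u k‖ ^ 2) + (CF.toReal + δ) * ∑' k : ℤ, ‖u k‖ ^ 2 := by
        rw [hPreal, hUreal]
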